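/- Let σ ∈ (0,1), 0 < μ ≤ L, and 0 < η < min( (1−σ)³/(512L), σ³/(64L) ). Set α = √(μη) and let G(η) be the 3×3 real matrix with rows ( (1−α)σ, ασ, ηL/α ), ( ((1−α)/(1+α))ασ, ((1+α²)/(1+α))σ, 2ηL ), ( ασ, 2, σ+2ηL ). Then the spectral radius ρ(G(η)) satisfies σ + (σηL)^{1/3} < ρ(G(η)) < σ + 4(ηL)^{1/3} < (1+σ)/2. -/

import Mathlib

/-- Spectral radius of a real 3×3 matrix: the largest modulus of its complex eigenvalues. -/
noncomputable def specRad (M : Matrix (Fin 3) (Fin 3) ℝ) : ℝ :=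
  sSup ((fun z => ‖z‖) '' spectrum ℂ (M.map Complex.ofReal))

set_option maxHeartbeats 1000000 in
lemma stmt8_aux_neg (σ s t α : ℝ) (hσ0 : 0 < σ) (hσ1 : σ < 1) (hs0 : 0 < s) (ht0 : 0 < t)
    (hst : s ≤ t) (hα0 : 0 < α) (hαt : 16*α < 5*t) (ht12 : 12*t < 1) (hs3 : s^3 = σ*t^3) :
    (s + α*σ) * ((1+α)*s + α*σ*(1-α)) * (s - 2*(t^3))
      - 4*(t^3)*(1+α)*(s + α*σ) - σ*(t^3)*((1+α)*s + α*σ*(1-α))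
      - (1-α)*α^2*σ^2*(s - 2*(t^3)) - 2*(t^3)*(1+α)*α^2*σ^2 - 2*σ*(t^3)*(1-α) < 0 := by
  have hα8 : α < 1/8 := by linarith
  have h1mα : (0:ℝ) ≤ 1 - α := by linarith
  have e1 : 2 * α * s ^ 2 < (5:ℝ)/8 * t ^ 3 := by
    nlinarith [mul_pos (mul_pos ht0 ht0) (show (0:ℝ) < 5*t - 16*α by linarith),
      mul_nonneg (mul_nonneg hα0.le (sub_nonneg.mpr hst)) (by linarith : (0:ℝ) ≤ t + s)]
  have hN : (0:ℝ) ≤ 2*(t^3)*(s^2*(1+α) + 2*α*σ*s + α^2*σ^2*(1-α))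
      + 4*(t^3)*(1+α)*(s + α*σ) + σ*(t^3)*(s*(1+α) + α*σ*(1-α)) + 4*(t^3)*α^3*σ^2 := by
    positivity
  have hmain : σ*(t^3)*(3*α - 1) + 2*α*σ*s^2 < 0 := by
    have h2 : 2 * α * σ * s ^ 2 < (5:ℝ)/8 * σ * t ^ 3 := by nlinarith [e1, hσ0]
    nlinarith [h2, mul_pos (mul_pos hσ0 (pow_pos ht0 3))
      (show (0:ℝ) < 3/8 - 3*α by linarith)]
  nlinarith [hN, hmain, hs3]

set_option maxHeartbeats 1000000 in
lemma stmt8_aux_pos (σ t α : ℝ) (hσ0 : 0 < σ) (hσ1 : σ < 1) (ht0 : 0 < t)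
    (hα0 : 0 < α) (hαle : α ≤ t) (ht12 : 12*t < 1) :
    0 < (4*t + α*σ) * ((1+α)*(4*t) + α*σ*(1-α)) * (4*t - 2*(t^3))
      - 4*(t^3)*(1+α)*(4*t + α*σ) - σ*(t^3)*((1+α)*(4*t) + α*σ*(1-α))
      - (1-α)*α^2*σ^2*(4*t - 2*(t^3)) - 2*(t^3)*(1+α)*α^2*σ^2 - 2*σ*(t^3)*(1-α) := by
  have hσle : σ ≤ 1 := hσ1.le
  have hα12 : α < 1/12 := by linarith
  have h1mα : (0:ℝ) ≤ 1 - α := by linarith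
  have ht2 : 2*t^3 ≤ t := by nlinarith [mul_pos ht0 ht0]
  have hu0 : (0:ℝ) ≤ α*σ := by positivity
  have hu : α*σ ≤ t := by nlinarith [mul_le_mul hαle hσle hσ0.le ht0.le]
  have hX0 : (0:ℝ) < t^3 := pow_pos ht0 3
  have T1 : 48*t^3 ≤ (4*t + α*σ) * ((1+α)*(4*t) + α*σ*(1-α)) * (4*t - 2*(t^3)) := by
    have e1 : 4*t ≤ 4*t + α*σ := by linarith
    have e2 : 4*t ≤ (1+α)*(4*t) + α*σ*(1-α) := by nlinarith [mul_nonneg hu0 h1mα, mul_pos hα0 ht0]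
    have e3 : 3*t ≤ 4*t - 2*(t^3) := by linarith
    calc (48:ℝ)*t^3 = (4*t)*(4*t)*(3*t) := by ring
      _ ≤ _ := by
        apply mul_le_mul (mul_le_mul e1 e2 (by linarith) (by linarith)) e3 (by linarith)
        positivity
  have B1 : 4*(t^3)*(1+α)*(4*t + α*σ) ≤ 10*t^3 := by
    nlinarith [mul_le_mul (show (1:ℝ)+α ≤ 2 by linarith) (show 4*t + α*σ ≤ 5*t by linarith)
      (by linarith) (by norm_num : (0:ℝ) ≤ 2), hX0, mul_pos hX0 ht0, ht12,
      mul_lt_mul_of_pos_left ht12 (mul_pos hX0 ht0)]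
  have B2 : σ*(t^3)*((1+α)*(4*t) + α*σ*(1-α)) ≤ 6*t^3 := by
    nlinarith [hX0, mul_pos hX0 ht0, mul_nonneg hu0 h1mα,
      mul_le_mul_of_nonneg_left (show (1+α)*(4*t) + α*σ*(1-α) ≤ 6*t by nlinarith [mul_nonneg hu0 hα0.le, mul_pos hα0 ht0]) (mul_nonneg hσ0.le hX0.le),
      mul_nonneg (mul_nonneg hσ0.le hX0.le) ht0.le,
      mul_le_mul_of_nonneg_right hσle (mul_nonneg hX0.le ht0.le)]
  have B3 : (1-α)*α^2*σ^2*(4*t - 2*(t^3)) ≤ 4*t^3 := by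
    nlinarith [mul_pos ht0 ht0, mul_pos (mul_pos ht0 ht0) ht0,
      mul_nonneg (mul_nonneg h1mα (sq_nonneg α)) (sq_nonneg σ),
      mul_le_mul (mul_le_mul hαle hαle hα0.le ht0.le) (show σ^2 ≤ 1 by nlinarith) (sq_nonneg σ) (mul_nonneg ht0.le ht0.le),
      mul_nonneg (mul_nonneg (sq_nonneg α) (sq_nonneg σ)) ht0.le]
  have B4 : 2*(t^3)*(1+α)*α^2*σ^2 ≤ 4*t^3 := by
    nlinarith [hX0, mul_le_mul (mul_le_mul hαle hαle hα0.le ht0.le) (show σ^2 ≤ 1 by nlinarith) (sq_nonneg σ) (mul_nonneg ht0.le ht0.le),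
      mul_nonneg (mul_nonneg hX0.le (sq_nonneg α)) (sq_nonneg σ), mul_pos ht0 ht0]
  have B5 : 2*σ*(t^3)*(1-α) ≤ 2*t^3 := by
    nlinarith [mul_nonneg (mul_nonneg hσ0.le hX0.le) hα0.le, mul_nonneg hX0.le h1mα,
      mul_le_mul_of_nonneg_right hσle hX0.le]
  linarith

set_option maxHeartbeats 1000000 in
lemma stmt8_aux_contra (σ t α k c1 c2 c3 a r : ℝ) (hσ0 : 0 < σ) (hσ1 : σ < 1)
    (ht0 : 0 < t) (ht12 : 12*t < 1)
    (hc10 : 0 ≤ c1) (hc1σ : c1 ≤ σ) (hc20 : 0 ≤ c2) (hc2σ : c2 ≤ σ)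
    (hk0 : 0 ≤ k) (hk1 : k ≤ 1) (hα2σ : α^2*σ^2 ≤ t^3) (hασ0 : 0 ≤ α^2*σ^2)
    (hc3 : c3 = σ + 2*t^3) (haeq : a = r + σ + 2*t^3) (hrgt : 3*t < r)
    (hfin : r^3 ≤ 4*(t^3)*(a + c1) + σ*(t^3)*(a + c2) + k*α^2*σ^2*(a + c3)
      + 2*(t^3)*α^2*σ^2 + 2*σ*(t^3)*k) : False := by
  have hX0 : (0:ℝ) < t^3 := pow_pos ht0 3
  have hr0 : 0 < r := by linarith
  have ha0 : 0 < a := by linarith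
  have hc30 : 0 ≤ c3 := by rw [hc3]; positivity
  have hXa : t^3*a = t^3*r + t^3*σ + 2*(t^3*t^3) := by rw [haeq]; ring
  have hksm : k*(α^2*σ^2) ≤ t^3 := by
    calc k*(α^2*σ^2) ≤ 1*(t^3) := mul_le_mul hk1 hα2σ hασ0 (by norm_num)
      _ = t^3 := by ring
  have hkac : k*(α^2*σ^2)*(a + c3) ≤ t^3*(a + c3) :=
    mul_le_mul_of_nonneg_right hksm (by linarith)
  have h2X : 2*(t^3)*(α^2*σ^2) ≤ 2*(t^3)*(t^3) :=
    mul_le_mul_of_nonneg_left hα2σ (by positivity)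
  have hσk1 : σ*k ≤ 1 := by
    calc σ*k ≤ 1*1 := mul_le_mul hσ1.le hk1 hk0 (by norm_num)
      _ = 1 := by ring
  have h2σk : 2*σ*(t^3)*k ≤ 2*(t^3) := by
    calc 2*σ*(t^3)*k = 2*(t^3)*(σ*k) := by ring
      _ ≤ 2*(t^3)*1 := mul_le_mul_of_nonneg_left hσk1 (by positivity)
      _ = 2*(t^3) := by ring
  have hm1 : 4*(t^3)*(a + c1) ≤ 4*(t^3)*(a + σ) :=
    mul_le_mul_of_nonneg_left (by linarith) (by positivity)
  have hm2 : σ*(t^3)*(a + c2) ≤ t^3*(a + σ) := by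
    have e : σ*(a + c2) ≤ 1*(a + σ) := mul_le_mul hσ1.le (by linarith) (by linarith) (by norm_num)
    calc σ*(t^3)*(a + c2) = (t^3)*(σ*(a+c2)) := by ring
      _ ≤ (t^3)*(1*(a+σ)) := mul_le_mul_of_nonneg_left e hX0.le
      _ = t^3*(a + σ) := by ring
  have hstep : r^3 ≤ 6*(t^3)*r + 14*(t^3) + 16*(t^3*t^3) := by
    have e1 : t^3*(a + c3) = t^3*r + t^3*σ + 2*(t^3*t^3) + t^3*σ + 2*(t^3*t^3) := by
      rw [hc3, haeq]; ring
    linarith [hfin, hm1, hm2, hkac, h2X, h2σk, hXa, e1,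
      mul_nonneg hX0.le (by linarith : (0:ℝ) ≤ 1 - σ)]
  have hd : 0 < r - 3*t := by linarith
  have C1 : 0 < (r-3*t)*(r-3*t)*(r-3*t) := by positivity
  have C2 : 0 ≤ (r-3*t)*(r-3*t)*t := by positivity
  have C3 : 0 ≤ (r-3*t)*t^2 := by positivity
  have h12 : (0:ℝ) ≤ 1 - 12*t := by linarith
  have C4 : 0 ≤ t^3*(1-12*t) := by positivity
  have C5 : 0 ≤ t^4*(1-12*t) := by positivity
  have C6 : 0 ≤ t^5*(1-12*t) := by positivity
  have C7 : 0 ≤ t^2*(r-3*t)*(1-12*t) := by positivity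
  nlinarith [hstep, C1, C2, C3, C4, C5, C6, C7, hX0]


lemma spec_iff_det (M : Matrix (Fin 3) (Fin 3) ℂ) (z : ℂ) :
    z ∈ spectrum ℂ M ↔ (z • (1 : Matrix (Fin 3) (Fin 3) ℂ) - M).det = 0 := by
  rw [spectrum.mem_iff, Algebra.algebraMap_eq_smul_one, Matrix.isUnit_iff_isUnit_det,
    isUnit_iff_ne_zero, not_ne_iff]

set_option maxHeartbeats 4000000 in
/-- bounds on the spectral radius of the linear-system matrix G(η) of
Acc-DNGD-SC: σ + (σηL)^{1/3} < ρ(G(η)) < σ + 4(ηL)^{1/3} < (1+σ)/2. -/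
theorem stmt_8 (σ μ L η : ℝ) (hσ0 : 0 < σ) (hσ1 : σ < 1) (hμ : 0 < μ) (hμL : μ ≤ L)
    (hη0 : 0 < η) (hη : η < min ((1 - σ) ^ 3 / (512 * L)) (σ ^ 3 / (64 * L)))
    (α : ℝ) (hα : α = Real.sqrt (μ * η))
    (G : Matrix (Fin 3) (Fin 3) ℝ)
    (hG : G = !![(1 - α) * σ, α * σ, η * L / α;
                 (1 - α) / (1 + α) * (α * σ), (1 + α ^ 2) / (1 + α) * σ, 2 * η * L;
                 α * σ, 2, σ + 2 * η * L]) :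
    σ + (σ * η * L) ^ ((1 : ℝ) / 3) < specRad G ∧
    specRad G < σ + 4 * (η * L) ^ ((1 : ℝ) / 3) ∧
    σ + 4 * (η * L) ^ ((1 : ℝ) / 3) < (1 + σ) / 2 := by
  have hL : 0 < L := lt_of_lt_of_le hμ hμL
  have hx : 0 < η * L := mul_pos hη0 hL
  have hσx : 0 < σ * η * L := mul_pos (mul_pos hσ0 hη0) hL
  set t : ℝ := (η * L) ^ ((1 : ℝ) / 3) with htdef
  set s : ℝ := (σ * η * L) ^ ((1 : ℝ) / 3) with hsdef
  have ht0 : 0 < t := Real.rpow_pos_of_pos hx _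
  have hs0 : 0 < s := Real.rpow_pos_of_pos hσx _
  have ht3 : t ^ 3 = η * L := by
    rw [htdef, ← Real.rpow_natCast (((η * L) ^ ((1:ℝ)/3))) 3, ← Real.rpow_mul hx.le]
    norm_num
  have hs3 : s ^ 3 = σ * η * L := by
    rw [hsdef, ← Real.rpow_natCast (((σ * η * L) ^ ((1:ℝ)/3))) 3, ← Real.rpow_mul hσx.le]
    norm_num
  -- bounds on η L
  have hη1 : η < (1 - σ) ^ 3 / (512 * L) := lt_of_lt_of_le hη (min_le_left _ _)
  have hη2 : η < σ ^ 3 / (64 * L) := lt_of_lt_of_le hη (min_le_right _ _)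
  have hxb2 : η * L < σ ^ 3 / 64 := by
    have h := mul_lt_mul_of_pos_right hη2 hL
    have he : σ ^ 3 / (64 * L) * L = σ ^ 3 / 64 := by field_simp
    rwa [he] at h
  have hxb1 : η * L < (1 - σ) ^ 3 / 512 := by
    have h := mul_lt_mul_of_pos_right hη1 hL
    have he : (1 - σ) ^ 3 / (512 * L) * L = (1 - σ) ^ 3 / 512 := by field_simp
    rwa [he] at h
  have h4t : 4 * t < σ := by
    have h : t ^ 3 < (σ / 4) ^ 3 := by rw [ht3]; nlinarith [hxb2]
    have := lt_of_pow_lt_pow_left₀ 3 (by positivity : (0:ℝ) ≤ σ / 4) h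
    linarith
  have h8t : 8 * t < 1 - σ := by
    have hσ' : (0:ℝ) ≤ (1 - σ) / 8 := by linarith
    have h : t ^ 3 < ((1 - σ) / 8) ^ 3 := by rw [ht3]; nlinarith [hxb1]
    have := lt_of_pow_lt_pow_left₀ 3 hσ' h
    linarith
  have ht12 : 12 * t < 1 := by linarith
  -- α facts
  have hα0 : 0 < α := by rw [hα]; exact Real.sqrt_pos.mpr (mul_pos hμ hη0)
  have hα2 : α ^ 2 = μ * η := by rw [hα, sq, Real.mul_self_sqrt (mul_pos hμ hη0).le]
  have hα2t : α ^ 2 ≤ t ^ 3 := by rw [hα2, ht3]; nlinarith [mul_le_mul_of_nonneg_right hμL hη0.le]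
  have hαt : 16 * α < 5 * t := by
    have h : (16 * α) ^ 2 < (5 * t) ^ 2 := by nlinarith [hα2t, ht12, ht0, sq_nonneg t]
    have := lt_of_pow_lt_pow_left₀ 2 (by positivity : (0:ℝ) ≤ 5 * t) h
    linarith
  have hα8 : α < 1 / 8 := by linarith
  have h1α : (0:ℝ) < 1 + α := by linarith
  have hst : s ≤ t := by
    have h : s ^ 3 ≤ t ^ 3 := by rw [hs3, ht3]; nlinarith [mul_le_mul_of_nonneg_right hσ1.le hx.le]
    exact le_of_pow_le_pow_left₀ (by norm_num) ht0.le h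
  -- the characteristic polynomial (as a real function)
  set c1 : ℝ := (1 - α) * σ with hc1def
  set c2 : ℝ := (1 + α ^ 2) / (1 + α) * σ with hc2def
  set c3 : ℝ := σ + 2 * (η * L) with hc3def
  set k : ℝ := (1 - α) / (1 + α) with hkdef
  set f : ℝ → ℝ := fun w => (w - c1) * (w - c2) * (w - c3)
      - 4 * (η * L) * (w - c1) - σ * (η * L) * (w - c2) - k * α ^ 2 * σ ^ 2 * (w - c3)
      - 2 * (η * L) * α ^ 2 * σ ^ 2 - 2 * σ * (η * L) * k with hfdef
  have hαne : α ≠ 0 := ne_of_gt hα0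
  have h1αne : (1 + α) ≠ 0 := ne_of_gt h1α
  -- determinant identity over ℂ
  have hdetC : ∀ z : ℂ, (z • (1 : Matrix (Fin 3) (Fin 3) ℂ) - G.map Complex.ofReal).det
      = (z - (c1:ℝ)) * (z - (c2:ℝ)) * (z - (c3:ℝ))
        - ((4 * (η*L) : ℝ)) * (z - (c1:ℝ)) - ((σ * (η*L) : ℝ)) * (z - (c2:ℝ))
        - ((k * α ^ 2 * σ ^ 2 : ℝ)) * (z - (c3:ℝ))
        - ((2 * (η*L) * α ^ 2 * σ ^ 2 : ℝ)) - ((2 * σ * (η*L) * k : ℝ)) := by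
    intro z
    have hαC : (α : ℂ) ≠ 0 := by exact_mod_cast hαne
    have h1αC : ((1:ℂ) + α) ≠ 0 := by exact_mod_cast h1αne
    rw [hG]
    simp only [Matrix.det_fin_three, Matrix.map_apply, Matrix.sub_apply, Matrix.smul_apply,
      Matrix.one_apply, Matrix.of_apply, Matrix.cons_val', Matrix.cons_val_zero, Matrix.cons_val_one,
      Matrix.head_cons, Matrix.empty_val', Matrix.cons_val_fin_one, Matrix.head_fin_const,
      Matrix.cons_val_two, Matrix.tail_cons, hc1def, hc2def, hc3def, hkdef]
    push_cast
    field_simp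
    ring
  -- relation between real f and the complex determinant
  have hdetR : ∀ w : ℝ, ((w:ℂ) • (1 : Matrix (Fin 3) (Fin 3) ℂ) - G.map Complex.ofReal).det
      = (f w : ℂ) := by
    intro w
    rw [hdetC w, hfdef]
    push_cast
    ring
  -- sign of f at σ + s  (negative)
  have hfs : f (σ + s) < 0 := by
    have hEq : (1 + α) * f (σ + s)
        = (s + α*σ) * ((1+α)*s + α*σ*(1-α)) * (s - 2*(η*L))
          - 4*(η*L)*(1+α)*(s + α*σ) - σ*(η*L)*((1+α)*s + α*σ*(1-α))
          - (1-α)*α^2*σ^2*(s - 2*(η*L)) - 2*(η*L)*(1+α)*α^2*σ^2 - 2*σ*(η*L)*(1-α) := by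
      rw [hfdef]
      simp only [hc1def, hc2def, hc3def, hkdef]
      field_simp
      ring
    rw [← ht3] at hEq
    have hs3' : s^3 = σ*t^3 := by rw [ht3]; linear_combination hs3
    have hE := stmt8_aux_neg σ s t α hσ0 hσ1 hs0 ht0 hst hα0 hαt ht12 hs3'
    by_contra hcc
    push_neg at hcc
    have h9 : 0 ≤ (1 + α) * f (σ + s) := mul_nonneg h1α.le hcc
    rw [hEq] at h9
    linarith
  -- sign of f at σ + 4t  (positive)
  have hft : 0 < f (σ + 4*t) := by
    have hEq : (1 + α) * f (σ + 4*t)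
        = (4*t + α*σ) * ((1+α)*(4*t) + α*σ*(1-α)) * (4*t - 2*(η*L))
          - 4*(η*L)*(1+α)*(4*t + α*σ) - σ*(η*L)*((1+α)*(4*t) + α*σ*(1-α))
          - (1-α)*α^2*σ^2*(4*t - 2*(η*L)) - 2*(η*L)*(1+α)*α^2*σ^2 - 2*σ*(η*L)*(1-α) := by
      rw [hfdef]
      simp only [hc1def, hc2def, hc3def, hkdef]
      field_simp
      ring
    rw [← ht3] at hEq
    have hαle : α ≤ t := by linarith
    have hE := stmt8_aux_pos σ t α hσ0 hσ1 ht0 hα0 hαle ht12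
    by_contra hcc
    push_neg at hcc
    have h9 : (1 + α) * f (σ + 4*t) ≤ 0 := mul_nonpos_of_nonneg_of_nonpos h1α.le hcc
    rw [hEq] at h9
    linarith
  -- a real eigenvalue in (σ + s, σ + 4t]
  have hcont : ContinuousOn f (Set.Icc (σ + s) (σ + 4*t)) := by
    rw [hfdef]; fun_prop
  have hab : σ + s ≤ σ + 4*t := by linarith
  have hIcc : (0:ℝ) ∈ Set.Icc (f (σ + s)) (f (σ + 4*t)) := ⟨hfs.le, hft.le⟩
  obtain ⟨ρ₀, hρ₀mem, hρ₀⟩ := intermediate_value_Icc hab hcont hIcc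
  have hρ₀gt : σ + s < ρ₀ := by
    rcases lt_or_eq_of_le hρ₀mem.1 with h | h
    · exact h
    · exfalso; rw [← h] at hρ₀; rw [hρ₀] at hfs; exact lt_irrefl 0 hfs
  have hρ₀pos : 0 < ρ₀ := by linarith
  have hρ₀spec : (ρ₀ : ℂ) ∈ spectrum ℂ (G.map Complex.ofReal) := by
    rw [spec_iff_det, hdetR, hρ₀]
    norm_num
  -- upper bound on all eigenvalues
  have hub : ∀ z ∈ spectrum ℂ (G.map Complex.ofReal),
      ‖z‖ ≤ σ + 3*t + 2*(η*L) := by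
    intro z hz
    by_contra hcon
    push_neg at hcon
    have hdz := (spec_iff_det _ _).mp hz
    rw [hdetC z] at hdz
    set a : ℝ := ‖z‖ with ha
    have hc10 : 0 ≤ c1 := by rw [hc1def]; exact mul_nonneg (by linarith) hσ0.le
    have hc1σ : c1 ≤ σ := by rw [hc1def]; linarith [mul_nonneg hα0.le hσ0.le]
    have hc20 : 0 ≤ c2 := by rw [hc2def]; positivity
    have hc2σ : c2 ≤ σ := by
      rw [hc2def, div_mul_eq_mul_div, div_le_iff₀ h1α]
      linarith [mul_nonneg (mul_nonneg hσ0.le hα0.le) (by linarith : (0:ℝ) ≤ 1 - α)]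
    have hc30 : 0 ≤ c3 := by rw [hc3def]; linarith
    have hk0 : 0 ≤ k := by rw [hkdef]; apply div_nonneg <;> linarith
    have hk1 : k ≤ 1 := by rw [hkdef, div_le_one h1α]; linarith
    have hlow : ∀ c : ℝ, 0 ≤ c → c ≤ σ + 2*(η*L) →
        a - (σ + 2*(η*L)) ≤ ‖(z - (c:ℂ))‖ := by
      intro c hcpos hcle
      have h1 := norm_sub_norm_le z (c:ℂ)
      rw [Complex.norm_of_nonneg hcpos] at h1
      linarith
    have hhigh : ∀ c : ℝ, 0 ≤ c → ‖(z - (c:ℂ))‖ ≤ a + c := by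
      intro c hcpos
      have h1 := norm_sub_le z (c:ℂ)
      rw [Complex.norm_of_nonneg hcpos] at h1
      linarith
    set r : ℝ := a - (σ + 2*(η*L)) with hr
    have hrgt : 3*t < r := by rw [hr]; linarith
    have hr0 : 0 < r := by linarith
    -- the eigenvalue equation rearranged
    have heq : (z - (c1:ℝ)) * (z - (c2:ℝ)) * (z - (c3:ℝ))
        = ((4 * (η*L) : ℝ)) * (z - (c1:ℝ)) + ((σ * (η*L) : ℝ)) * (z - (c2:ℝ))
        + ((k * α ^ 2 * σ ^ 2 : ℝ)) * (z - (c3:ℝ))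
        + ((2 * (η*L) * α ^ 2 * σ ^ 2 : ℝ)) + ((2 * σ * (η*L) * k : ℝ)) := by
      linear_combination hdz
    have hL1 := hlow c1 hc10 (by linarith)
    have hL2 := hlow c2 hc20 (by linarith)
    have hL3 := hlow c3 hc30 (by rw [hc3def])
    have hH1 := hhigh c1 hc10
    have hH2 := hhigh c2 hc20
    have hH3 := hhigh c3 hc30
    have hprod : r^3 ≤ ‖((z - (c1:ℝ)) * (z - (c2:ℝ)) * (z - (c3:ℝ)))‖ := by
      rw [norm_mul, norm_mul]
      have p1 : (0:ℝ) ≤ ‖(z - (c1:ℝ))‖ := norm_nonneg _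
      have p2 : (0:ℝ) ≤ ‖(z - (c2:ℝ))‖ := norm_nonneg _
      calc r^3 = r*r*r := by ring
        _ ≤ ‖(z - (c1:ℝ))‖ * ‖(z - (c2:ℝ))‖ * ‖(z - (c3:ℝ))‖ :=
            mul_le_mul (mul_le_mul hL1 hL2 hr0.le p1) hL3 hr0.le (mul_nonneg p1 p2)
    have hRHS : ‖(((4 * (η*L) : ℝ)) * (z - (c1:ℝ)) + ((σ * (η*L) : ℝ)) * (z - (c2:ℝ))
        + ((k * α ^ 2 * σ ^ 2 : ℝ)) * (z - (c3:ℝ))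
        + ((2 * (η*L) * α ^ 2 * σ ^ 2 : ℝ)) + ((2 * σ * (η*L) * k : ℝ)))‖
        ≤ 4*(η*L)*(a + c1) + σ*(η*L)*(a + c2) + k*α^2*σ^2*(a + c3)
          + 2*(η*L)*α^2*σ^2 + 2*σ*(η*L)*k := by
      have hnn1 : (0:ℝ) ≤ 4*(η*L) := by positivity
      have hnn2 : (0:ℝ) ≤ σ*(η*L) := by positivity
      have hnn3 : (0:ℝ) ≤ k*α^2*σ^2 := by positivity
      calc ‖_‖ ≤ ‖(((4 * (η*L) : ℝ)) * (z - (c1:ℝ)))‖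
            + ‖(((σ * (η*L) : ℝ)) * (z - (c2:ℝ)))‖
            + ‖(((k * α ^ 2 * σ ^ 2 : ℝ)) * (z - (c3:ℝ)))‖
            + ‖((2 * (η*L) * α ^ 2 * σ ^ 2 : ℝ) : ℂ)‖
            + ‖((2 * σ * (η*L) * k : ℝ) : ℂ)‖ := by
              refine le_trans (norm_add_le _ _) ?_
              refine add_le_add (le_trans (norm_add_le _ _) ?_) le_rfl
              refine add_le_add (le_trans (norm_add_le _ _) ?_) le_rfl
              exact add_le_add (norm_add_le _ _) le_rfl
        _ ≤ 4*(η*L)*(a + c1) + σ*(η*L)*(a + c2) + k*α^2*σ^2*(a + c3)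
          + 2*(η*L)*α^2*σ^2 + 2*σ*(η*L)*k := by
              simp only [norm_mul]
              rw [Complex.norm_of_nonneg hnn1, Complex.norm_of_nonneg hnn2, Complex.norm_of_nonneg hnn3,
                Complex.norm_of_nonneg (by positivity : (0:ℝ) ≤ 2 * (η*L) * α ^ 2 * σ ^ 2),
                Complex.norm_of_nonneg (by positivity : (0:ℝ) ≤ 2 * σ * (η*L) * k)]
              exact add_le_add (add_le_add (add_le_add (add_le_add
                (mul_le_mul_of_nonneg_left hH1 hnn1) (mul_le_mul_of_nonneg_left hH2 hnn2))
                (mul_le_mul_of_nonneg_left hH3 hnn3)) le_rfl) le_rfl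
    rw [heq] at hprod
    have hfin : r^3 ≤ 4*(η*L)*(a + c1) + σ*(η*L)*(a + c2) + k*α^2*σ^2*(a + c3)
          + 2*(η*L)*α^2*σ^2 + 2*σ*(η*L)*k := le_trans hprod hRHS
    -- derive contradiction
    rw [← ht3] at hfin
    have hσ21 : σ^2 ≤ 1 := by linarith [mul_le_mul_of_nonneg_left hσ1.le hσ0.le]
    have hα2σ : α^2*σ^2 ≤ t^3 := by
      calc α^2*σ^2 ≤ α^2*1 := mul_le_mul_of_nonneg_left hσ21 (sq_nonneg α)
        _ = α^2 := by ring
        _ ≤ t^3 := hα2t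
    have hασ0 : (0:ℝ) ≤ α^2*σ^2 := by positivity
    have hc3t : c3 = σ + 2*t^3 := by rw [hc3def, ht3]
    have haeq : a = r + σ + 2*t^3 := by rw [hr, ht3]; ring
    exact stmt8_aux_contra σ t α k c1 c2 c3 a r hσ0 hσ1 ht0 ht12 hc10 hc1σ hc20 hc2σ
      hk0 hk1 hα2σ hασ0 hc3t haeq hrgt hfin
  -- assemble
  have himg : (ρ₀ : ℝ) ∈ (fun z => ‖z‖) '' spectrum ℂ (G.map Complex.ofReal) := by
    refine ⟨(ρ₀ : ℂ), hρ₀spec, ?_⟩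
    simp [Complex.norm_of_nonneg hρ₀pos.le, hρ₀pos.le]
  have hbdd : BddAbove ((fun z => ‖z‖) '' spectrum ℂ (G.map Complex.ofReal)) := by
    refine ⟨σ + 3*t + 2*(η*L), ?_⟩
    rintro _ ⟨z, hz, rfl⟩
    exact hub z hz
  have hsup_ge : ρ₀ ≤ specRad G := le_csSup hbdd himg
  have hsup_le : specRad G ≤ σ + 3*t + 2*(η*L) := by
    refine csSup_le ⟨ρ₀, himg⟩ ?_
    rintro _ ⟨z, hz, rfl⟩
    exact hub z hz
  have h2x : 2*(η*L) < t := by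
    rw [← ht3]
    have e1 := mul_lt_mul_of_pos_left ht12 ht0
    have e2 := mul_lt_mul_of_pos_left e1 ht0
    linarith [e1, e2, ht0]
  refine ⟨?_, ?_, ?_⟩
  · calc σ + (σ * η * L) ^ ((1:ℝ)/3) = σ + s := rfl
      _ < ρ₀ := hρ₀gt
      _ ≤ specRad G := hsup_ge
  · calc specRad G ≤ σ + 3*t + 2*(η*L) := hsup_le
      _ < σ + 4*t := by linarith
      _ = σ + 4 * (η * L) ^ ((1:ℝ)/3) := rfl
  · linarith
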